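/- Let X be a real inner product space and let x, y be nonzero elements of X. Then ‖x/‖x‖ − y/‖y‖‖ ≤ 2‖x−y‖/(‖x‖+‖y‖). -/

import Mathlib

open scoped RealInnerProductSpace


theorem dunkl_williams_inner {X : Type*} [NormedAddCommGroup X] [InnerProductSpace ℝ X]
    (x y : X) (hx : x ≠ 0) (hy : y ≠ 0) :
    ‖‖x‖⁻¹ • x - ‖y‖⁻¹ • y‖ ≤ 2 * ‖x - y‖ / (‖x‖ + ‖y‖) := by
  have ha : (0:ℝ) < ‖x‖ := norm_pos_iff.mpr hx
  have hb : (0:ℝ) < ‖y‖ := norm_pos_iff.mpr hy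
  rw [le_div_iff₀ (by positivity)]
  have cs : |(inner ℝ x y : ℝ)| ≤ ‖x‖ * ‖y‖ := abs_real_inner_le_norm x y
  have h1 : ‖‖x‖⁻¹ • x - ‖y‖⁻¹ • y‖ ^ 2 =
      2 - 2 * ((inner ℝ x y : ℝ) / (‖x‖ * ‖y‖)) := by
    rw [norm_sub_sq_real, real_inner_smul_left, real_inner_smul_right,
      norm_smul, norm_smul]
    rw [Real.norm_eq_abs, Real.norm_eq_abs, abs_of_pos (by positivity), abs_of_pos (by positivity)]
    field_simp
    ring
  have h2 : ‖x - y‖ ^ 2 = ‖x‖ ^ 2 - 2 * (inner ℝ x y : ℝ) + ‖y‖ ^ 2 := by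
    rw [norm_sub_sq_real]
  have key : (‖‖x‖⁻¹ • x - ‖y‖⁻¹ • y‖ * (‖x‖ + ‖y‖)) ^ 2 ≤ (2 * ‖x - y‖) ^ 2 := by
    have hab : (0:ℝ) < ‖x‖ * ‖y‖ := by positivity
    have habs : -(‖x‖ * ‖y‖) ≤ (inner ℝ x y : ℝ) := (abs_le.mp cs).1
    have expand : (‖‖x‖⁻¹ • x - ‖y‖⁻¹ • y‖ * (‖x‖ + ‖y‖)) ^ 2 =
        (2 - 2 * ((inner ℝ x y : ℝ) / (‖x‖ * ‖y‖))) * (‖x‖ + ‖y‖) ^ 2 := by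
      rw [mul_pow, h1]
    rw [expand, mul_pow, h2]
    rw [div_eq_mul_inv]
    have e : ((inner ℝ x y : ℝ) * (‖x‖ * ‖y‖)⁻¹) * (‖x‖ * ‖y‖) = (inner ℝ x y : ℝ) := by
      field_simp
    nlinarith [sq_nonneg (‖x‖ - ‖y‖), mul_pos ha hb, e,
      mul_nonneg (sq_nonneg (‖x‖ - ‖y‖)) (by linarith : (0:ℝ) ≤ ‖x‖ * ‖y‖ + (inner ℝ x y : ℝ))]
  nlinarith [norm_nonneg (‖x‖⁻¹ • x - ‖y‖⁻¹ • y), norm_nonneg (x - y), key,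
    mul_pos ha hb]
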